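/- Laplace mechanism privacy: for a query f : S^n → ℝ^k with L1-sensitivity Δf = max over neighboring databases of ‖f(s) - f(s')‖₁, the mechanism M(s) = f(s) + (Z₁,…,Z_k) with Z_i i.i.d. Laplace with scale Δf/ε is ε-differentially private. -/

import Mathlib

open MeasureTheory

/-- The law of a vector of `k` i.i.d. Laplace random variables with scale `b`,
given by the density `∏ i (1/2b)·exp(-|z_i|/b)` with respect to Lebesgue measure. -/
noncomputable def lapNoise (k : ℕ) (b : ℝ) : Measure (Fin k → ℝ) :=
  volume.withDensity (fun z => ENNReal.ofReal (∏ i, (1 / (2 * b)) * Real.exp (-|z i| / b)))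

/-- The Laplace mechanism: output `f(s) + Z` with `Z` i.i.d. Laplace noise of scale `b`. -/
noncomputable def lapMech {S : Type*} {n k : ℕ}
    (f : (Fin n → S) → Fin k → ℝ) (b : ℝ) (s : Fin n → S) : Measure (Fin k → ℝ) :=
  Measure.map (fun z => f s + z) (lapNoise k b)

/-- Laplace mechanism privacy: if `f` has L1-sensitivity at most `Δf`, the Laplace
mechanism with scale `Δf/ε` is `ε`-differentially private. -/
theorem laplace_mechanism_private {S : Type*} {n k : ℕ}
    (f : (Fin n → S) → Fin k → ℝ) (Δf ε : ℝ) (hΔ : 0 < Δf) (hε : 0 < ε)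
    (hsens : ∀ (s : Fin n → S) (i : Fin n) (si' : S),
      (∑ j, |f s j - f (Function.update s i si') j|) ≤ Δf) :
    ∀ (s : Fin n → S) (i : Fin n) (si' : S) (B : Set (Fin k → ℝ)), MeasurableSet B →
      lapMech f (Δf / ε) s B ≤
        ENNReal.ofReal (Real.exp ε) * lapMech f (Δf / ε) (Function.update s i si') B := by
  intro s i si' B hB
  set b : ℝ := Δf / ε with hb
  have hbpos : 0 < b := div_pos hΔ hε
  set s' := Function.update s i si' with hs'
  set c : Fin k → ℝ := f s - f s' with hc
  set g : (Fin k → ℝ) → ENNReal :=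
    fun z => ENNReal.ofReal (∏ j, (1 / (2 * b)) * Real.exp (-|z j| / b)) with hg
  have hmeas : ∀ t : Fin n → S, Measurable (fun z : Fin k → ℝ => f t + z) :=
    fun t => measurable_const.add measurable_id
  have hmap : ∀ t : Fin n → S,
      lapMech f b t B = ∫⁻ z in (fun z => f t + z) ⁻¹' B, g z ∂volume := by
    intro t
    rw [lapMech, Measure.map_apply (hmeas t) hB, lapNoise,
      withDensity_apply _ (hB.preimage (hmeas t))]
  rw [hmap s, hmap s']
  -- translate the second integral
  have himg : (· + c) '' ((fun z => f s + z) ⁻¹' B) = (fun z => f s' + z) ⁻¹' B := by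
    ext z
    simp only [Set.mem_image, Set.mem_preimage]
    constructor
    · rintro ⟨w, hw, rfl⟩
      have : f s' + (w + c) = f s + w := by
        simp [hc]; abel
      rwa [this]
    · intro hz
      refine ⟨z - c, ?_, by abel⟩
      have : f s + (z - c) = f s' + z := by
        simp [hc]; abel
      rwa [this]
  have htrans : ∫⁻ z in (fun z => f s + z) ⁻¹' B, g (z + c) ∂volume
      = ∫⁻ z in (fun z => f s' + z) ⁻¹' B, g z ∂volume := by
    rw [← himg]
    exact (measurePreserving_add_right volume c).setLIntegral_comp_emb
      (MeasurableEquiv.addRight c).measurableEmbedding g _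
  rw [← htrans, ← lintegral_const_mul' _ _ ENNReal.ofReal_ne_top]
  refine setLIntegral_mono_ae (by fun_prop) (Filter.Eventually.of_forall fun z _ => ?_)
  -- pointwise density ratio bound
  have hsum : (∑ j, |c j|) ≤ Δf := by
    simpa [hc] using hsens s i si'
  have key : (∏ j, (1 / (2 * b)) * Real.exp (-|z j| / b))
      ≤ Real.exp ε * ∏ j, (1 / (2 * b)) * Real.exp (-|(z + c) j| / b) := by
    rw [Finset.prod_mul_distrib, Finset.prod_mul_distrib, ← Real.exp_sum, ← Real.exp_sum,
      ← mul_assoc, mul_comm (Real.exp ε), mul_assoc, ← Real.exp_add]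
    refine mul_le_mul_of_nonneg_left (Real.exp_le_exp.2 ?_)
      (Finset.prod_nonneg fun j _ => by positivity)
    have step : ∀ j : Fin k, -|z j| / b ≤ -|(z + c) j| / b + |c j| / b := by
      intro j
      rw [← add_div, div_le_div_iff_of_pos_right hbpos]
      have h1 := abs_sub_abs_le_abs_sub ((z + c) j) (z j)
      have h2 : |(z + c) j - z j| = |c j| := by simp
      linarith
    calc ∑ j, -|z j| / b ≤ ∑ j, (-|(z + c) j| / b + |c j| / b) :=
          Finset.sum_le_sum fun j _ => step j
      _ = (∑ j, -|(z + c) j| / b) + (∑ j, |c j|) / b := by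
          rw [Finset.sum_add_distrib, Finset.sum_div]
      _ ≤ (∑ j, -|(z + c) j| / b) + ε := by
          have h1 : (∑ j, |c j|) / b ≤ Δf / b := by gcongr
          have hΔb : Δf / b = ε := by rw [hb]; field_simp [hΔ.ne', hε.ne']
          linarith
      _ = ε + ∑ j, -|(z + c) j| / b := by ring
  calc g z ≤ ENNReal.ofReal (Real.exp ε * ∏ j, (1 / (2 * b)) * Real.exp (-|(z + c) j| / b)) :=
        ENNReal.ofReal_le_ofReal key
    _ = ENNReal.ofReal (Real.exp ε) * g (z + c) := by
        rw [ENNReal.ofReal_mul (Real.exp_nonneg ε)]
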